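/- Let c ∈ ℝ and let W : ℝ² → ℝ be a polynomial function with W(x,y) > 0 for all (x, y) ∈ ℝ². Then the Jacobian matrix of the R5-class vector field at the origin (0,0) has determinant Δ = −(c² + W(0,0)²), which is strictly negative for every value of c; hence the origin is a saddle point independent of the parameter c and of the modification W. -/

import Mathlib

lemma aux_eval (W : MvPolynomial (Fin 2) ℝ) (v : Fin 2 → Polynomial ℝ) (x : ℝ) :
    MvPolynomial.eval (fun i => (v i).eval x) W = (MvPolynomial.aeval v W).eval x := by
  have := MvPolynomial.comp_aeval_apply (R := ℝ) (f := v)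
    (Polynomial.aeval x : Polynomial ℝ →ₐ[ℝ] ℝ) W
  simp only [Polynomial.coe_aeval_eq_eval] at this
  rw [this, MvPolynomial.aeval_eq_eval₂Hom]
  rfl

lemma aux_diff (W : MvPolynomial (Fin 2) ℝ) (v : Fin 2 → Polynomial ℝ) :
    Differentiable ℝ (fun x : ℝ => MvPolynomial.eval (fun i => (v i).eval x) W) := by
  simp only [aux_eval]
  exact (MvPolynomial.aeval v W).differentiable

lemma diff1 (W : MvPolynomial (Fin 2) ℝ) :
    Differentiable ℝ (fun x : ℝ => MvPolynomial.eval ![x, 0] W) := by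
  have h : (fun x : ℝ => MvPolynomial.eval ![x, 0] W)
      = fun x : ℝ => MvPolynomial.eval (fun i => ((![Polynomial.X, 0] : Fin 2 → Polynomial ℝ) i).eval x) W := by
    funext x
    have hv : (![x, 0] : Fin 2 → ℝ) = fun i => ((![Polynomial.X, 0] : Fin 2 → Polynomial ℝ) i).eval x := by
      funext i; fin_cases i <;> simp
    rw [hv]
  rw [h]; exact aux_diff W _

lemma diff2 (W : MvPolynomial (Fin 2) ℝ) :
    Differentiable ℝ (fun y : ℝ => MvPolynomial.eval ![0, y] W) := by
  have h : (fun y : ℝ => MvPolynomial.eval ![0, y] W)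
      = fun y : ℝ => MvPolynomial.eval (fun i => ((![0, Polynomial.X] : Fin 2 → Polynomial ℝ) i).eval y) W := by
    funext y
    have hv : (![0, y] : Fin 2 → ℝ) = fun i => ((![0, Polynomial.X] : Fin 2 → Polynomial ℝ) i).eval y := by
      funext i; fin_cases i <;> simp
    rw [hv]
  rw [h]; exact aux_diff W _

lemma deriv_xmul (h : ℝ → ℝ) (hh : DifferentiableAt ℝ h 0) :
    deriv (fun x => x * h x) 0 = h 0 := by
  rw [deriv_fun_mul differentiableAt_fun_id hh]
  simp

theorem stmt18 (c : ℝ) (W : MvPolynomial (Fin 2) ℝ)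
    (hW : ∀ x y : ℝ, 0 < MvPolynomial.eval ![x, y] W)
    (P Q : ℝ → ℝ → ℝ)
    (hP : ∀ x y : ℝ, P x y = x * (2*x^2 + 2*y^2 + 1) * ((x^2 + y^2)^2 + x^2 - y^2 - c)
      - y * (2*x^2 + 2*y^2 - 1) * MvPolynomial.eval ![x, y] W)
    (hQ : ∀ x y : ℝ, Q x y = y * (2*x^2 + 2*y^2 - 1) * ((x^2 + y^2)^2 + x^2 - y^2 - c)
      + x * (2*x^2 + 2*y^2 + 1) * MvPolynomial.eval ![x, y] W)
    (Δ : ℝ)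
    (hΔ : Δ = deriv (fun x : ℝ => P x 0) 0 * deriv (fun y : ℝ => Q 0 y) 0
      - deriv (fun y : ℝ => P 0 y) 0 * deriv (fun x : ℝ => Q x 0) 0) :
    Δ = -(c^2 + (MvPolynomial.eval ![(0 : ℝ), (0 : ℝ)] W)^2) ∧ Δ < 0 := by
  set w0 : ℝ := MvPolynomial.eval ![(0 : ℝ), (0 : ℝ)] W with hw0
  have e1 : (fun x : ℝ => P x 0) = fun x => x * ((2*x^2+1)*((x^2)^2+x^2-c)) := by
    funext x; rw [hP]; ring
  have e2 : (fun y : ℝ => P 0 y) = fun y => y * ((1-2*y^2) * MvPolynomial.eval ![0, y] W) := by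
    funext y; rw [hP]; ring
  have e3 : (fun y : ℝ => Q 0 y) = fun y => y * ((2*y^2-1)*((y^2)^2-y^2-c)) := by
    funext y; rw [hQ]; ring
  have e4 : (fun x : ℝ => Q x 0) = fun x => x * ((2*x^2+1) * MvPolynomial.eval ![x, 0] W) := by
    funext x; rw [hQ]; ring
  have d1 : deriv (fun x : ℝ => P x 0) 0 = -c := by
    rw [e1, deriv_xmul _ (by fun_prop)]; norm_num
  have d2 : deriv (fun y : ℝ => P 0 y) 0 = w0 := by
    rw [e2, deriv_xmul _ (((differentiable_const _).fun_sub (by fun_prop)).fun_mul (diff2 W)).differentiableAt]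
    norm_num [hw0]
  have d3 : deriv (fun y : ℝ => Q 0 y) 0 = c := by
    rw [e3, deriv_xmul _ (by fun_prop)]; norm_num
  have d4 : deriv (fun x : ℝ => Q x 0) 0 = w0 := by
    rw [e4, deriv_xmul _ ((by fun_prop : Differentiable ℝ fun x : ℝ => 2*x^2+1).fun_mul (diff1 W)).differentiableAt]
    norm_num [hw0]
  rw [hΔ, d1, d2, d3, d4]
  constructor
  · ring
  · have := hW 0 0
    nlinarith [sq_nonneg c]
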